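/- Fix θ > 0 and define f : [0, ∞) → ℝ by the everywhere-convergent power series f(x) = Σ_{n=0}^{∞} x^{2n+1} / ( n! · θ^n · √((n+1)θ) ). Then f is differentiable on (0, ∞) and for every x > 0 the strict differential inequality f′(x) − (2x/θ) f(x) < (√θ / x²) ( e^{x²/θ} − 1 ) holds. -/

import Mathlib

private lemma two_mul_add_one_le_three_pow (n : ℕ) : (2 * n + 1 : ℝ) ≤ 3 ^ n := by
  induction n with
  | zero => norm_num
  | succ k ih =>
    push_cast at ih ⊢
    rw [pow_succ]
    nlinarith

private lemma fv_den_pos (θ : ℝ) (hθ : 0 < θ) (n : ℕ) :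
    0 < (n.factorial : ℝ) * θ ^ n * Real.sqrt ((n + 1) * θ) :=
  mul_pos (mul_pos (by exact_mod_cast n.factorial_pos) (pow_pos hθ n))
    (Real.sqrt_pos.2 (mul_pos (by positivity) hθ))

private lemma fv_summable_main (θ : ℝ) (hθ : 0 < θ) (r : ℝ) :
    Summable (fun n : ℕ => (2 * n + 1 : ℝ) * r ^ (2 * n) *
      ((n.factorial : ℝ) * θ ^ n * Real.sqrt ((n + 1) * θ))⁻¹) := by
  have hs : 0 < Real.sqrt θ := Real.sqrt_pos.2 hθ
  have hsum : Summable (fun n : ℕ => (3 * r ^ 2 / θ) ^ n / n.factorial * (Real.sqrt θ)⁻¹) :=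
    (Real.summable_pow_div_factorial _).mul_right _
  refine hsum.of_nonneg_of_le (fun n => ?_) (fun n => ?_)
  · have h1 : (0:ℝ) ≤ (2 * n + 1 : ℝ) * r ^ (2 * n) := by
      rw [pow_mul]; positivity
    exact mul_nonneg h1 (le_of_lt (inv_pos.2 (fv_den_pos θ hθ n)))
  · have h1 : (2 * n + 1 : ℝ) * r ^ (2 * n) ≤ (3 * r ^ 2) ^ n := by
      rw [pow_mul, mul_pow]
      exact mul_le_mul_of_nonneg_right (two_mul_add_one_le_three_pow n)
        (pow_nonneg (sq_nonneg r) n)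
    have h2 : ((n.factorial : ℝ) * θ ^ n * Real.sqrt ((n + 1) * θ))⁻¹ ≤
        ((n.factorial : ℝ) * θ ^ n * Real.sqrt θ)⁻¹ := by
      apply inv_anti₀ (mul_pos (mul_pos (by exact_mod_cast n.factorial_pos)
        (pow_pos hθ n)) hs)
      exact mul_le_mul_of_nonneg_left
        (Real.sqrt_le_sqrt (by nlinarith [Nat.cast_nonneg (α := ℝ) n]))
        (by positivity)
    calc (2 * n + 1 : ℝ) * r ^ (2 * n) *
          ((n.factorial : ℝ) * θ ^ n * Real.sqrt ((n + 1) * θ))⁻¹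
        ≤ (3 * r ^ 2) ^ n * ((n.factorial : ℝ) * θ ^ n * Real.sqrt θ)⁻¹ := by
          apply mul_le_mul h1 h2 (le_of_lt (inv_pos.2 (fv_den_pos θ hθ n)))
            (by positivity)
      _ = (3 * r ^ 2 / θ) ^ n / n.factorial * (Real.sqrt θ)⁻¹ := by
          simp only [div_pow, mul_inv, div_eq_mul_inv]
          ring

private lemma fv_summable_aux2 (θ : ℝ) (hθ : 0 < θ) (r : ℝ) (hr : 0 ≤ r) :
    Summable (fun n : ℕ => r ^ (2 * n + 1) *
      ((n.factorial : ℝ) * θ ^ n * Real.sqrt ((n + 1) * θ))⁻¹) := by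
  refine ((fv_summable_main θ hθ r).mul_left r).of_nonneg_of_le (fun n => ?_) (fun n => ?_)
  · exact mul_nonneg (pow_nonneg hr _) (le_of_lt (inv_pos.2 (fv_den_pos θ hθ n)))
  · have hcn : 0 ≤ ((n.factorial : ℝ) * θ ^ n * Real.sqrt ((n + 1) * θ))⁻¹ :=
      le_of_lt (inv_pos.2 (fv_den_pos θ hθ n))
    have h1 : (1:ℝ) * r ^ (2*n) * ((n.factorial : ℝ) * θ ^ n * Real.sqrt ((n + 1) * θ))⁻¹
        ≤ (2 * n + 1 : ℝ) * r ^ (2*n) * ((n.factorial : ℝ) * θ ^ n * Real.sqrt ((n + 1) * θ))⁻¹ := by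
      gcongr
      · nlinarith [Nat.cast_nonneg (α := ℝ) n]
    have h2 := mul_le_mul_of_nonneg_left h1 hr
    calc r ^ (2*n+1) * ((n.factorial : ℝ) * θ ^ n * Real.sqrt ((n + 1) * θ))⁻¹
        = r * ((1:ℝ) * r ^ (2*n) * ((n.factorial : ℝ) * θ ^ n * Real.sqrt ((n + 1) * θ))⁻¹) := by
          rw [pow_succ]; ring
      _ ≤ r * ((2 * n + 1 : ℝ) * r ^ (2*n) * ((n.factorial : ℝ) * θ ^ n * Real.sqrt ((n + 1) * θ))⁻¹) := h2


private lemma fv_num_ineq (a b : ℝ) (ha1 : 1 ≤ a) (hb2 : b ^ 2 = a ^ 2 + 1) (hb0 : 0 < b) :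
    (2 * a ^ 2 + 1) / b - 2 * a < 1 / b ^ 2 := by
  have ha0 : 0 < a := lt_of_lt_of_le one_pos ha1
  have hkey : (2 * a ^ 2 + 1) * b < 1 + 2 * a * (a ^ 2 + 1) := by
    have h2 : ((2 * a ^ 2 + 1) * b) ^ 2 < (1 + 2 * a * (a ^ 2 + 1)) ^ 2 := by
      have e1 : ((2 * a ^ 2 + 1) * b) ^ 2 = (2 * a ^ 2 + 1) ^ 2 * (a ^ 2 + 1) := by
        rw [mul_pow, hb2]
      nlinarith [sq_nonneg a, sq_nonneg (a-1), sq_nonneg (a+1)]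
    have hr : 0 ≤ 1 + 2 * a * (a ^ 2 + 1) := by positivity
    exact lt_of_pow_lt_pow_left₀ 2 hr h2
  have hb2' : (0:ℝ) < b ^ 2 := by positivity
  rw [lt_div_iff₀ hb2']
  have hbne : b ≠ 0 := hb0.ne'
  have hexp : ((2 * a ^ 2 + 1) / b - 2 * a) * b ^ 2 =
      (2 * a ^ 2 + 1) * b - 2 * a * (a ^ 2 + 1) := by
    field_simp
    linear_combination (-2*a) * hb2
  linarith [hexp, hkey]


set_option maxHeartbeats 1000000 in
/-- For `θ > 0` and `f(x) = Σ_{n≥0} x^{2n+1}/(n! θ^n √((n+1)θ))`, the function `f`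
is differentiable on `(0, ∞)` and satisfies the strict differential inequality
`f'(x) - (2x/θ) f(x) < (√θ/x²)(e^{x²/θ} - 1)` for every `x > 0`. -/
theorem fock_vortex_differential_inequality (θ : ℝ) (hθ : 0 < θ)
    (f : ℝ → ℝ)
    (hf : f = fun x => ∑' n : ℕ,
      x ^ (2 * n + 1) / ((n.factorial : ℝ) * θ ^ n * Real.sqrt ((n + 1) * θ))) :
    ∀ x : ℝ, 0 < x →
      DifferentiableAt ℝ f x ∧
      deriv f x - (2 * x / θ) * f x <
        (Real.sqrt θ / x ^ 2) * (Real.exp (x ^ 2 / θ) - 1) := by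
  subst hf
  intro x hx
  have hxR : x ∈ Metric.ball (0:ℝ) (x+1) := by
    simp only [Metric.mem_ball, Real.dist_eq, sub_zero, abs_of_pos hx]
    linarith
  have hder : HasDerivAt
      (fun y : ℝ => ∑' n : ℕ,
        y ^ (2 * n + 1) / ((n.factorial : ℝ) * θ ^ n * Real.sqrt ((n + 1) * θ)))
      (∑' n : ℕ, (2 * (n:ℝ) + 1) * x ^ (2 * n) *
        ((n.factorial : ℝ) * θ ^ n * Real.sqrt ((n + 1) * θ))⁻¹) x := by
    apply hasDerivAt_tsum_of_isPreconnected (fv_summable_main θ hθ (x+1))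
      (Metric.isOpen_ball) ((convex_ball _ _).isPreconnected) ?_ ?_ hxR ?_ hxR
    · intro n y _
      have h := (hasDerivAt_pow (2*n+1) y).div_const
        ((n.factorial : ℝ) * θ ^ n * Real.sqrt ((n + 1) * θ))
      refine h.congr_deriv ?_
      rw [Nat.add_sub_cancel]
      push_cast
      try rw [div_eq_mul_inv]
      try ring
    · intro n y hy
      have hyb : |y| ≤ x + 1 := by
        rw [Metric.mem_ball, Real.dist_eq, sub_zero] at hy
        exact hy.le
      rw [Real.norm_eq_abs, abs_mul, abs_mul]
      have h1 : |(2 * (n:ℝ) + 1)| = 2 * (n:ℝ) + 1 := abs_of_pos (by positivity)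
      have h2 : |((n.factorial : ℝ) * θ ^ n * Real.sqrt ((n + 1) * θ))⁻¹|
          = ((n.factorial : ℝ) * θ ^ n * Real.sqrt ((n + 1) * θ))⁻¹ :=
        abs_of_pos (inv_pos.2 (fv_den_pos θ hθ n))
      rw [h1, h2, abs_pow]
      gcongr <;> first | exact abs_nonneg y | exact hyb
    · have := fv_summable_aux2 θ hθ x hx.le
      simpa [div_eq_mul_inv] using this
  refine ⟨hder.differentiableAt, ?_⟩
  rw [hder.deriv]
  -- abbreviations
  set A : ℕ → ℝ := fun n => (2 * (n:ℝ) + 1) * x ^ (2 * n) *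
    ((n.factorial : ℝ) * θ ^ n * Real.sqrt ((n + 1) * θ))⁻¹ with hA_def
  set G : ℕ → ℝ := fun n => x ^ (2 * n + 1) /
    ((n.factorial : ℝ) * θ ^ n * Real.sqrt ((n + 1) * θ)) with hG_def
  have hA : Summable A := fv_summable_main θ hθ x
  have hG : Summable G := by
    have := fv_summable_aux2 θ hθ x hx.le
    simpa [div_eq_mul_inv, hG_def] using this
  have hB : Summable (fun n => (2 * x / θ) * G n) := hG.mul_left _
  have hA1 : Summable (fun n => A (n+1)) := (summable_nat_add_iff 1).2 hA
  rw [show (2 * x / θ) * ∑' n, G n = ∑' n, (2 * x / θ) * G n from (tsum_mul_left).symm]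
  rw [Summable.tsum_eq_zero_add hA, add_sub_assoc, ← Summable.tsum_sub hA1 hB]
  -- RHS
  have hexp : Real.exp (x^2/θ) = ∑' n : ℕ, (x^2/θ)^n / n.factorial := by
    rw [Real.exp_eq_exp_ℝ]
    exact congrFun NormedSpace.exp_eq_tsum_div _
  have hsumexp : Summable (fun n : ℕ => (x^2/θ)^n / (n.factorial:ℝ)) :=
    Real.summable_pow_div_factorial _
  have hsumexp1 : Summable (fun n : ℕ => (x^2/θ)^(n+1) / ((n+1).factorial:ℝ)) :=
    (summable_nat_add_iff 1).2 hsumexp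
  rw [hexp, Summable.tsum_eq_zero_add hsumexp]
  norm_num
  rw [show (Real.sqrt θ / x ^ 2) * ∑' n : ℕ, (x^2/θ)^(n+1) / ((n+1).factorial:ℝ)
      = ∑' n : ℕ, (Real.sqrt θ / x ^ 2) * ((x^2/θ)^(n+1) / ((n+1).factorial:ℝ)) from
    (tsum_mul_left).symm]
  set R : ℕ → ℝ := fun n => (Real.sqrt θ / x ^ 2) * ((x^2/θ)^(n+1) / ((n+1).factorial:ℝ))
    with hR_def
  have hR : Summable R := hsumexp1.mul_left _
  have hR1 : Summable (fun n => R (n+1)) := (summable_nat_add_iff 1).2 hR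
  rw [Summable.tsum_eq_zero_add hR]
  have hterm : ∀ n : ℕ, A (n+1) - (2 * x / θ) * G n < R (n+1) := by
    intro n
    simp only [hA_def, hG_def, hR_def]
    push_cast [Nat.factorial_succ]
    have hn1 : (0:ℝ) < (n:ℝ) + 1 := by positivity
    have hn2 : (0:ℝ) < (n:ℝ) + 2 := by positivity
    have hsa : Real.sqrt (((n:ℝ) + 1) * θ) = Real.sqrt ((n:ℝ)+1) * Real.sqrt θ :=
      Real.sqrt_mul hn1.le θ
    have hsb : Real.sqrt (((n:ℝ) + 1 + 1) * θ) = Real.sqrt ((n:ℝ)+2) * Real.sqrt θ := by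
      rw [show ((n:ℝ)+1+1) = (n:ℝ)+2 by ring, Real.sqrt_mul hn2.le θ]
    rw [hsa, hsb, show ((n:ℝ)+1+1) = (n:ℝ)+2 by ring]
    set s := Real.sqrt θ with hs_def
    set a := Real.sqrt ((n:ℝ)+1) with ha_def
    set b := Real.sqrt ((n:ℝ)+2) with hb_def
    have hs0 : 0 < s := Real.sqrt_pos.2 hθ
    have ha0 : 0 < a := Real.sqrt_pos.2 hn1
    have hb0 : 0 < b := Real.sqrt_pos.2 hn2
    have hs2 : s ^ 2 = θ := Real.sq_sqrt hθ.le
    have ha2 : a ^ 2 = (n:ℝ) + 1 := Real.sq_sqrt hn1.le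
    have hb2 : b ^ 2 = (n:ℝ) + 2 := Real.sq_sqrt hn2.le
    have ha1 : 1 ≤ a := by
      rw [ha_def]
      rw [show (1:ℝ) = Real.sqrt 1 from (Real.sqrt_one).symm]
      exact Real.sqrt_le_sqrt (by simp [Nat.cast_nonneg])
    have hab : b ^ 2 = a ^ 2 + 1 := by rw [hb2, ha2]; ring
    rw [← hs2, ← ha2, ← hb2]
    have hfpos : (0:ℝ) < (n.factorial : ℝ) := by exact_mod_cast n.factorial_pos
    have hfne : (n.factorial : ℝ) ≠ 0 := hfpos.ne'
    have hxne : x ≠ 0 := hx.ne'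
    have hsne : s ≠ 0 := hs0.ne'
    have hane : a ≠ 0 := ha0.ne'
    have hbne : b ≠ 0 := hb0.ne'
    set K := x ^ (2*n+2) / (a ^ 2 * (n.factorial : ℝ) * (s ^ 2) ^ (n+1) * s) with hK_def
    have hK : 0 < K := by
      rw [hK_def]
      exact div_pos (pow_pos hx _)
        (mul_pos (mul_pos (mul_pos (pow_pos ha0 2) hfpos)
          (pow_pos (pow_pos hs0 2) _)) hs0)
    have hnum := fv_num_ineq a b ha1 hab hb0
    have hmul := mul_lt_mul_of_pos_left hnum hK
    refine lt_of_le_of_lt (le_of_eq ?_) (lt_of_lt_of_le hmul (le_of_eq ?_))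
    · rw [hK_def]; field_simp; ring
    · rw [hK_def]; field_simp; ring_nf; rw [inv_pow, inv_pow]; field_simp
  have h0 : A 0 = R 0 := by
    simp only [hA_def, hR_def]
    norm_num
    have h1 : Real.sqrt (1 * θ) = Real.sqrt θ := by rw [one_mul]
    have h2 : Real.sqrt θ * Real.sqrt θ = θ := Real.mul_self_sqrt hθ.le
    field_simp [h1]
    try nlinarith [h2, Real.sqrt_nonneg θ, hx]
  rw [h0]
  exact add_lt_add_of_le_of_lt le_rfl
    (Summable.tsum_lt_tsum (fun n => (hterm n).le) (hterm 0) (hA1.sub hB) hR1)
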